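/- Diamond on S²₁ implies tail club guessing on S²₁: if ◊(S²₁) holds, then there is a sequence ⟨η_δ : δ ∈ S²₁⟩ such that each η_δ is a closed copy of ω₁ (a closed subset of δ of order type ω₁) cofinal in δ, and for every club C ⊆ ω₂ there exist δ ∈ S²₁ and δ' < δ with η_δ \ δ' ⊆ C. -/

import Mathlib

open Cardinal Set

universe u w

def IsClubOrd (C : Set Ordinal) (δ : Ordinal) : Prop :=
  (∀ x ∈ C, x < δ) ∧ (∀ x < δ, ∃ y ∈ C, x ≤ y) ∧
  (∀ x, x < δ → x ≠ 0 → (∀ y < x, ∃ z ∈ C, y < z ∧ z < x) → x ∈ C)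

def S21 (δ : Ordinal) : Prop := δ < (aleph 2).ord ∧ Ordinal.cof δ = aleph 1

def HasOrderType (X : Set Ordinal) (α : Ordinal) : Prop :=
  ∃ g : Ordinal → Ordinal, StrictMonoOn g (Set.Iio α) ∧ X = g '' Set.Iio α

open Ordinal in
/-- limit points of a strictly cofinal set are cofinal, when `ℵ₀ < cof δ`. -/
lemma limPt_cofinal {δ : Ordinal} {C : Set Ordinal} (h0 : ℵ₀ < Ordinal.cof δ)
    (hC : ∀ y < δ, ∃ z ∈ C, y < z ∧ z < δ) :
    ∀ x < δ, ∃ s, x ≤ s ∧ s < δ ∧ s ≠ 0 ∧ ∀ y < s, ∃ z ∈ C, y < z ∧ z < s := by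
  classical
  intro x hx
  set F : Ordinal → Ordinal := fun y => if h : ∃ z, z ∈ C ∧ y < z ∧ z < δ then h.choose else 0
    with hF
  have hFspec : ∀ y < δ, F y ∈ C ∧ y < F y ∧ F y < δ := by
    intro y hy
    have h : ∃ z, z ∈ C ∧ y < z ∧ z < δ := by
      obtain ⟨z, hz1, hz2, hz3⟩ := hC y hy
      exact ⟨z, hz1, hz2, hz3⟩
    rw [hF]; simp only [dif_pos h]
    exact h.choose_spec
  set c : ℕ → Ordinal := fun n => F^[n] (F x) with hc
  have hc0 : c 0 = F x := by simp [hc]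
  have hcs : ∀ n, c (n + 1) = F (c n) := by
    intro n; rw [hc]; simp [Function.iterate_succ_apply']
  have hkey : ∀ n, c n ∈ C ∧ c n < δ ∧ c n < c (n + 1) := by
    intro n
    induction n with
    | zero =>
      have h0' := hFspec x hx
      refine ⟨by rw [hc0]; exact h0'.1, by rw [hc0]; exact h0'.2.2, ?_⟩
      rw [hcs 0, hc0]
      exact (hFspec (F x) h0'.2.2).2.1
    | succ n ih =>
      have h1 := hFspec (c n) ih.2.1
      have h2 : c (n + 1) < δ := by rw [hcs n]; exact h1.2.2
      refine ⟨by rw [hcs n]; exact h1.1, h2, ?_⟩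
      rw [hcs (n + 1)]
      exact (hFspec _ h2).2.1
  have hxc0 : x < c 0 := by rw [hc0]; exact (hFspec x hx).2.1
  have hle : ∀ n, c n ≤ ⨆ n, c n := fun n => Ordinal.le_iSup c n
  refine ⟨⨆ n, c n, hxc0.le.trans (hle 0), ?_, ?_, ?_⟩
  · refine Ordinal.iSup_lt_ord_lift ?_ fun n => (hkey n).2.1
    rw [mk_nat, lift_aleph0]
    exact h0
  · exact (((zero_le : (0:Ordinal) ≤ x).trans_lt hxc0).trans_le (hle 0)).ne'
  · intro y hy
    obtain ⟨n, hn⟩ := Ordinal.lt_iSup_iff.1 hy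
    exact ⟨c n, (hkey n).1, hn, (hkey n).2.2.trans_le (hle (n + 1))⟩

lemma isClub_Iio (δ : Ordinal) : IsClubOrd (Set.Iio δ) δ :=
  ⟨fun _ h => h, fun x hx => ⟨x, hx, le_rfl⟩, fun x hx _ _ => hx⟩

open Ordinal in
/-- Key construction: inside any club of `δ` with `cof δ = ℵ₁` there is a club
copy of `ω₁`. -/
lemma clubSub {δ : Ordinal.{u}} (hcof : Ordinal.cof δ = aleph 1) (D : Set Ordinal.{u})
    (hD : IsClubOrd D δ) : ∃ η, η ⊆ D ∧ IsClubOrd η δ ∧ HasOrderType η ((aleph 1 : Cardinal.{u})).ord := by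
  classical
  set W := δ.cof.ord with hWdef
  have hWa : W = (aleph 1).ord := by rw [hWdef, hcof]
  have hWlim : Order.IsSuccLimit W := by rw [hWa]; exact isSuccLimit_ord (aleph0_le_aleph 1)
  have hδlim : Order.IsSuccLimit δ := aleph0_le_cof.1 (by rw [hcof]; exact aleph0_le_aleph 1)
  have hW : δ.cof.ord = W := rfl
  have hstrict : ∀ y < δ, ∃ z ∈ D, y < z ∧ z < δ := by
    intro y hy
    obtain ⟨z, hz, hyz⟩ := hD.2.1 (Order.succ y) (hδlim.succ_lt hy)
    exact ⟨z, hz, (Order.lt_succ y).trans_le hyz, hD.1 z hz⟩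
  obtain ⟨f, hf⟩ := Ordinal.exists_fundamental_sequence δ
  set f' : Ordinal → Ordinal := fun j => if h : j < δ.cof.ord then f j h else 0 with hf'def
  have hf'lt : ∀ j < W, f' j < δ := by
    intro j hj
    have hj' : j < δ.cof.ord := by rwa [hW]
    rw [hf'def]; simp only [dif_pos hj']
    exact hf.lt hj'
  have hf'cof : ∀ x < δ, ∃ j < W, x ≤ f' j := by
    intro x hx
    have : x < Ordinal.blsub δ.cof.ord f := by rw [hf.blsub_eq]; exact hx
    obtain ⟨j, hj, hxj⟩ := Ordinal.lt_blsub_iff.1 this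
    refine ⟨j, by rwa [← hW], ?_⟩
    rw [hf'def]; simp only [dif_pos hj]; exact hxj
  set pick : Ordinal → Ordinal :=
    fun x => if h : ∃ d, d ∈ D ∧ x < d ∧ d < δ then h.choose else 0 with hpickdef
  have hpick : ∀ x < δ, pick x ∈ D ∧ x < pick x ∧ pick x < δ := by
    intro x hx
    have h : ∃ d, d ∈ D ∧ x < d ∧ d < δ := by
      obtain ⟨d, h1, h2, h3⟩ := hstrict x hx; exact ⟨d, h1, h2, h3⟩
    rw [hpickdef]; simp only [dif_pos h]
    exact h.choose_spec
  set g : Ordinal → Ordinal := fun i =>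
    Ordinal.limitRecOn i (pick 0) (fun j gj => pick (max gj (f' j)))
      (fun j _ ih => Ordinal.bsup j ih) with hgdef
  have hg0 : g 0 = pick 0 := Ordinal.limitRecOn_zero _ _ _
  have hgs : ∀ j, g (Order.succ j) = pick (max (g j) (f' j)) := fun j =>
    Ordinal.limitRecOn_succ _ _ _ _
  have hgl : ∀ j (h : Order.IsSuccLimit j), g j = Ordinal.bsup j (fun k _ => g k) := fun j h =>
    Ordinal.limitRecOn_limit _ _ _ _ h
  -- key invariant
  have key : ∀ i < W, g i ∈ D ∧ g i < δ ∧ ∀ j < i, g j < g i := by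
    intro i
    induction i using Ordinal.induction with
    | h i IH =>
      intro hiW
      rcases Ordinal.zero_or_succ_or_isSuccLimit i with rfl | ⟨j, rfl⟩ | hlim
      · have h := hpick 0 hδlim.pos
        rw [hg0]
        exact ⟨h.1, h.2.2, fun j hj => absurd hj (not_lt_of_ge (zero_le : (0:Ordinal) ≤ j))⟩
      · have hjW : j < W := (Order.lt_succ j).trans hiW
        obtain ⟨hjD, hjδ, hjmono⟩ := IH j (Order.lt_succ j) hjW
        have hm : max (g j) (f' j) < δ := max_lt hjδ (hf'lt j hjW)
        obtain ⟨h1, h2, h3⟩ := hpick _ hm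
        rw [hgs]
        refine ⟨h1, h3, fun k hk => ?_⟩
        rcases (Order.lt_succ_iff.1 hk).lt_or_eq with hkj | rfl
        · exact (hjmono k hkj).trans ((le_max_left _ _).trans_lt h2)
        · exact (le_max_left _ _).trans_lt h2
      · have hmono : ∀ j < i, g j < g i := by
          intro j hj
          have hsj : Order.succ j < i := hlim.succ_lt hj
          have h1 : g j < g (Order.succ j) :=
            (IH _ hsj (hsj.trans hiW)).2.2 j (Order.lt_succ j)
          have h2 : g (Order.succ j) ≤ g i := by
            rw [hgl i hlim]
            exact Ordinal.le_bsup (fun k _ => g k) (Order.succ j) hsj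
          exact h1.trans_le h2
        have hlt : g i < δ := by
          rw [hgl i hlim]
          refine Ordinal.bsup_lt_ord ?_ fun k hk => (IH k hk (hk.trans hiW)).2.1
          rw [hcof]
          exact Cardinal.lt_ord.1 (hWa ▸ hiW)
        have hne : g i ≠ 0 := by
          have : g 0 < g i := hmono 0 hlim.pos
          exact ((zero_le : (0:Ordinal) ≤ _).trans_lt this).ne'
        refine ⟨hD.2.2 (g i) hlt hne ?_, hlt, hmono⟩
        intro y hy
        rw [hgl i hlim] at hy
        obtain ⟨k, hk, hyk⟩ := Ordinal.lt_bsup _ |>.1 hy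
        exact ⟨g k, (IH k hk (hk.trans hiW)).1, hyk, hmono k hk⟩
  have gmono : ∀ j k, j < k → k < W → g j < g k := fun j k h hk => (key k hk).2.2 j h
  have gmono' : ∀ j k, j ≤ k → k < W → g j ≤ g k := by
    intro j k h hk
    rcases h.lt_or_eq with h | rfl
    · exact (gmono j k h hk).le
    · exact le_rfl
  -- cofinality of the image
  have hcofin : ∀ x < δ, ∃ i < W, x ≤ g i := by
    intro x hx
    obtain ⟨j, hjW, hxj⟩ := hf'cof x hx
    have hsW : Order.succ j < W := hWlim.succ_lt hjW
    refine ⟨Order.succ j, hsW, ?_⟩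
    have := (hpick _ (max_lt (key j hjW).2.1 (hf'lt j hjW))).2.1
    rw [hgs]
    exact hxj.trans ((le_max_right _ _).trans this.le)
  refine ⟨g '' Set.Iio W, ?_, ⟨?_, ?_, ?_⟩, g, ?_, by rw [hWa]⟩
  · rintro _ ⟨i, hi, rfl⟩
    exact (key i hi).1
  · rintro _ ⟨i, hi, rfl⟩
    exact (key i hi).2.1
  · intro x hx
    obtain ⟨i, hiW, hxi⟩ := hcofin x hx
    exact ⟨g i, ⟨i, hiW, rfl⟩, hxi⟩
  · -- closedness
    intro x hxδ hx0 hlp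
    set S := {i | i < W ∧ x ≤ g i} with hSdef
    have hSne : S.Nonempty := by
      obtain ⟨i, hiW, hxi⟩ := hcofin x hxδ
      exact ⟨i, hiW, hxi⟩
    set μ := Ordinal.lt_wf.min S hSne with hμdef
    have hμS : μ ∈ S := Ordinal.lt_wf.min_mem S hSne
    have hμmin : ∀ j < μ, j < W → g j < x := by
      intro j hj hjW
      by_contra h
      exact Ordinal.lt_wf.not_lt_min S ⟨hjW, not_lt.1 h⟩ hj
    rcases Ordinal.zero_or_succ_or_isSuccLimit μ with hμ0 | ⟨ν, hμν⟩ | hμlim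
    · exfalso
      obtain ⟨z, hz, h0z, hzx⟩ := hlp 0 (pos_iff_ne_zero.2 hx0)
      obtain ⟨k, hkW, rfl⟩ := hz
      have : x ≤ g k := (hμS.2.trans (gmono' μ k (hμ0 ▸ (zero_le : (0:Ordinal) ≤ k)) hkW))
      exact absurd hzx (not_lt.2 this)
    · exfalso
      have hνμ : ν < μ := hμν ▸ Order.lt_succ ν
      have hνW : ν < W := hνμ.trans hμS.1
      have hgν : g ν < x := hμmin ν hνμ hνW
      obtain ⟨z, hz, hνz, hzx⟩ := hlp (g ν) hgν
      obtain ⟨k, hkW, rfl⟩ := hz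
      rcases lt_or_ge ν k with hk | hk
      · have : μ ≤ k := hμν ▸ Order.succ_le_of_lt hk
        exact absurd (hzx.trans_le hμS.2) (not_lt.2 (gmono' μ k this hkW))
      · exact absurd hνz (not_lt.2 (gmono' k ν hk hνW))
    · have : g μ ≤ x := by
        rw [hgl μ hμlim]
        exact Ordinal.bsup_le_iff.2 fun k hk => (hμmin k hk (hk.trans hμS.1)).le
      exact ⟨μ, hμS.1, le_antisymm this hμS.2⟩
  · intro a ha b hb hab
    rw [← hWa] at hb
    exact gmono a b hab hb

/-- single-universe core of the theorem. -/
theorem tcg_core (A : Ordinal.{u} → Set Ordinal.{u})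
    (hdiamond : ∀ B ⊆ Set.Iio (aleph 2).ord, ∀ C, IsClubOrd C (aleph 2).ord →
      ∃ δ, S21 δ ∧ δ ∈ C ∧ B ∩ Set.Iio δ = A δ) :
    ∃ η : Ordinal.{u} → Set Ordinal.{u},
      (∀ δ, S21 δ → IsClubOrd (η δ) δ ∧ HasOrderType (η δ) ((aleph 1 : Cardinal.{u})).ord) ∧
      (∀ C, IsClubOrd C (aleph 2).ord →
        ∃ δ, S21 δ ∧ ∃ δ' < δ, {x ∈ η δ | δ' ≤ x} ⊆ C) := by
  classical
  have main : ∀ δ, S21 δ → ∃ η, (IsClubOrd (A δ) δ → η ⊆ A δ) ∧ IsClubOrd η δ ∧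
      HasOrderType η (aleph 1).ord := by
    intro δ hδ
    by_cases hc : IsClubOrd (A δ) δ
    · obtain ⟨η, h1, h2, h3⟩ := clubSub hδ.2 (A δ) hc
      exact ⟨η, fun _ => h1, h2, h3⟩
    · obtain ⟨η, _, h2, h3⟩ := clubSub hδ.2 (Set.Iio δ) (isClub_Iio δ)
      exact ⟨η, fun h => absurd h hc, h2, h3⟩
  choose! η hη1 hη2 hη3 using main
  refine ⟨η, fun δ hδ => ⟨hη2 δ hδ, hη3 δ hδ⟩, ?_⟩
  intro C hC
  set Ω := (aleph 2).ord with hΩdef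
  have hΩlim : Order.IsSuccLimit Ω := Cardinal.isSuccLimit_ord (aleph0_le_aleph 2)
  have hΩcof : ℵ₀ < Ω.cof := by
    have h2 : (2 : Ordinal) = Order.succ 1 := by
      rw [Order.succ_eq_add_one, one_add_one_eq_two]
    have : Ω.cof = aleph 2 := by
      rw [hΩdef, h2]
      exact (Cardinal.isRegular_aleph_succ 1).cof_eq
    rw [this]
    exact aleph0_lt_aleph_one.trans (aleph_lt_aleph.2 one_lt_two)
  have hCstrict : ∀ y < Ω, ∃ z ∈ C, y < z ∧ z < Ω := by
    intro y hy
    obtain ⟨z, hz, hyz⟩ := hC.2.1 (Order.succ y) (hΩlim.succ_lt hy)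
    exact ⟨z, hz, (Order.lt_succ y).trans_le hyz, hC.1 z hz⟩
  set C' := {x | x < Ω ∧ x ≠ 0 ∧ ∀ y < x, ∃ z ∈ C, y < z ∧ z < x} with hC'def
  have hC'sub : C' ⊆ C := fun x hx => hC.2.2 x hx.1 hx.2.1 hx.2.2
  have hC'club : IsClubOrd C' Ω := by
    refine ⟨fun x hx => hx.1, ?_, ?_⟩
    · intro x hx
      obtain ⟨s, hxs, hsΩ, hs0, hslp⟩ := limPt_cofinal hΩcof hCstrict x hx
      exact ⟨s, ⟨hsΩ, hs0, hslp⟩, hxs⟩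
    · intro x hxΩ hx0 hlp
      refine ⟨hxΩ, hx0, fun y hy => ?_⟩
      obtain ⟨z, hz, hyz, hzx⟩ := hlp y hy
      exact ⟨z, hC'sub hz, hyz, hzx⟩
  obtain ⟨δ, hδS, hδC', hEq⟩ := hdiamond C' (fun x hx => hx.1) C' hC'club
  have hδ0 : (0 : Ordinal) < δ := by
    rcases eq_zero_or_pos δ with rfl | h
    · exfalso
      have h0 := hδS.2
      rw [Ordinal.cof_zero] at h0
      exact (aleph_pos 1).ne' h0.symm
    · exact h
  have hδcof : ℵ₀ < Ordinal.cof δ := by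
    rw [hδS.2]; exact aleph0_lt_aleph_one
  -- A δ = C' ∩ Iio δ is a club in δ
  have hAclub : IsClubOrd (A δ) δ := by
    rw [← hEq]
    refine ⟨fun x hx => hx.2, ?_, ?_⟩
    · intro x hx
      obtain ⟨s, hxs, hsδ, hs0, hslp⟩ := limPt_cofinal hδcof hδC'.2.2 x hx
      exact ⟨s, ⟨⟨hsδ.trans hδS.1, hs0, hslp⟩, hsδ⟩, hxs⟩
    · intro x hxδ hx0 hlp
      refine ⟨⟨hxδ.trans hδS.1, hx0, fun y hy => ?_⟩, hxδ⟩
      obtain ⟨z, hz, hyz, hzx⟩ := hlp y hy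
      exact ⟨z, hC'sub hz.1, hyz, hzx⟩
  refine ⟨δ, hδS, 0, hδ0, ?_⟩
  intro x hx
  have hxA : x ∈ A δ := hη1 δ hδS hAclub hx.1
  rw [← hEq] at hxA
  exact hC'sub hxA.1


section Lift

universe v

open Ordinal

lemma lift_ord_aleph_one : Ordinal.lift.{v, 0} (aleph 1).ord = (aleph 1).ord := by
  rw [Cardinal.lift_ord, Cardinal.lift_aleph, Ordinal.lift_one]

lemma lift_ord_aleph_two : Ordinal.lift.{v, 0} (aleph 2).ord = (aleph 2).ord := by
  rw [Cardinal.lift_ord, Cardinal.lift_aleph, Ordinal.lift_ofNat]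

lemma lift_isClub_down {C : Set Ordinal.{v}} {δ : Ordinal.{0}}
    (h : IsClubOrd C (Ordinal.lift.{v, 0} δ)) :
    IsClubOrd {x | Ordinal.lift.{v, 0} x ∈ C} δ := by
  refine ⟨fun x hx => ?_, fun x hx => ?_, fun x hxδ hx0 hlp => ?_⟩
  · exact Ordinal.lift_lt.1 (h.1 _ hx)
  · obtain ⟨y, hy, hxy⟩ := h.2.1 (Ordinal.lift.{v} x) (Ordinal.lift_lt.2 hx)
    obtain ⟨y', hy', rfl⟩ := Ordinal.lt_lift_iff.1 (h.1 _ hy)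
    exact ⟨y', hy, Ordinal.lift_le.1 hxy⟩
  · have h1 : Ordinal.lift.{v} x ≠ 0 := by
      have h2 : Ordinal.lift.{v} (0 : Ordinal.{0}) < Ordinal.lift.{v} x :=
        Ordinal.lift_lt.2 (pos_iff_ne_zero.2 hx0)
      rw [Ordinal.lift_zero] at h2
      exact h2.ne'
    refine h.2.2 _ (Ordinal.lift_lt.2 hxδ) h1 ?_
    intro y hy
    obtain ⟨y', hy', rfl⟩ := Ordinal.lt_lift_iff.1 hy
    obtain ⟨z', hz', h2, h3⟩ := hlp y' hy'
    exact ⟨Ordinal.lift.{v} z', hz', Ordinal.lift_lt.2 h2, Ordinal.lift_lt.2 h3⟩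

lemma lift_isClub_up {C : Set Ordinal.{0}} {δ : Ordinal.{0}}
    (h : IsClubOrd C δ) :
    IsClubOrd (Ordinal.lift.{v, 0} '' C) (Ordinal.lift.{v, 0} δ) := by
  refine ⟨?_, fun x hx => ?_, fun x hxδ hx0 hlp => ?_⟩
  · rintro _ ⟨x, hx, rfl⟩
    exact Ordinal.lift_lt.2 (h.1 x hx)
  · obtain ⟨x', hx', rfl⟩ := Ordinal.lt_lift_iff.1 hx
    obtain ⟨y, hy, hxy⟩ := h.2.1 x' hx'
    exact ⟨Ordinal.lift.{v} y, ⟨y, hy, rfl⟩, Ordinal.lift_le.2 hxy⟩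
  · obtain ⟨x', hx', rfl⟩ := Ordinal.lt_lift_iff.1 hxδ
    have hx'0 : x' ≠ 0 := by
      rintro rfl
      exact hx0 Ordinal.lift_zero
    refine ⟨x', h.2.2 x' hx' hx'0 ?_, rfl⟩
    intro y hy
    obtain ⟨z, hz, h2, h3⟩ := hlp (Ordinal.lift.{v} y) (Ordinal.lift_lt.2 hy)
    obtain ⟨z', hz', rfl⟩ := hz
    exact ⟨z', hz', Ordinal.lift_lt.1 h2, Ordinal.lift_lt.1 h3⟩

lemma lift_S21 {δ : Ordinal.{0}} : S21 (Ordinal.lift.{v, 0} δ) ↔ S21 δ := by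
  have h1 : (aleph 1 : Cardinal.{v}) = Cardinal.lift.{v, 0} (aleph 1 : Cardinal.{0}) := by
    rw [Cardinal.lift_aleph, Ordinal.lift_one]
  rw [S21, S21, ← lift_ord_aleph_two.{v}, Ordinal.lift_lt, ← Ordinal.lift_cof, h1,
    Cardinal.lift_inj]

lemma lift_hasOrderType {X : Set Ordinal.{0}} {α : Ordinal.{0}}
    (h : HasOrderType X α) :
    HasOrderType (Ordinal.lift.{v, 0} '' X) (Ordinal.lift.{w, 0} α) := by
  classical
  obtain ⟨g, hmono, himg⟩ := h
  set G : Ordinal.{w} → Ordinal.{v} := fun i =>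
    if h : ∃ i' < α, Ordinal.lift.{w} i' = i then Ordinal.lift.{v} (g h.choose) else 0
    with hGdef
  have hG : ∀ i' < α, G (Ordinal.lift.{w} i') = Ordinal.lift.{v} (g i') := by
    intro i' hi'
    have h : ∃ j < α, Ordinal.lift.{w} j = Ordinal.lift.{w} i' := ⟨i', hi', rfl⟩
    rw [hGdef]
    simp only [dif_pos h]
    obtain ⟨h1, h2⟩ := h.choose_spec
    rw [Ordinal.lift_inj.1 h2]
  refine ⟨G, ?_, ?_⟩
  · intro a ha b hb hab
    obtain ⟨a', ha', rfl⟩ := Ordinal.lt_lift_iff.1 ha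
    obtain ⟨b', hb', rfl⟩ := Ordinal.lt_lift_iff.1 hb
    rw [hG a' ha', hG b' hb']
    exact Ordinal.lift_lt.2 (hmono ha' hb' (Ordinal.lift_lt.1 hab))
  · ext x
    constructor
    · rintro ⟨x', hx', rfl⟩
      rw [himg] at hx'
      obtain ⟨i', hi', rfl⟩ := hx'
      exact ⟨Ordinal.lift.{w} i', Ordinal.lift_lt.2 hi', hG i' hi'⟩
    · rintro ⟨i, hi, rfl⟩
      obtain ⟨i', hi', rfl⟩ := Ordinal.lt_lift_iff.1 hi
      rw [hG i' hi']
      exact ⟨g i', by rw [himg]; exact ⟨i', hi', rfl⟩, rfl⟩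

end Lift

/-- ◊(S²₁) implies tail club guessing on S²₁. -/
theorem stmt5 (A : Ordinal → Set Ordinal)
    (hA : ∀ δ, S21 δ → A δ ⊆ Set.Iio δ)
    (hdiamond : ∀ B ⊆ Set.Iio (aleph 2).ord, ∀ C, IsClubOrd C (aleph 2).ord →
      ∃ δ, S21 δ ∧ δ ∈ C ∧ B ∩ Set.Iio δ = A δ) :
    ∃ η : Ordinal → Set Ordinal,
      (∀ δ, S21 δ → IsClubOrd (η δ) δ ∧ HasOrderType (η δ) (aleph 1).ord) ∧
      (∀ C, IsClubOrd C (aleph 2).ord →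
        ∃ δ, S21 δ ∧ ∃ δ' < δ, {x ∈ η δ | δ' ≤ x} ⊆ C) := by
  classical
  -- Step A: transfer the diamond hypothesis down to universe 0
  set A₀ : Ordinal.{0} → Set Ordinal.{0} :=
    fun δ₀ => {x₀ | Ordinal.lift x₀ ∈ A (Ordinal.lift δ₀)} with hA₀def
  have hdia₀ : ∀ B₀ ⊆ Set.Iio (aleph 2).ord, ∀ C₀, IsClubOrd C₀ (aleph 2).ord →
      ∃ δ₀, S21 δ₀ ∧ δ₀ ∈ C₀ ∧ B₀ ∩ Set.Iio δ₀ = A₀ δ₀ := by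
    intro B₀ hB₀ C₀ hC₀
    have hBsub : Ordinal.lift '' B₀ ⊆ Set.Iio (aleph 2).ord := by
      rintro _ ⟨x₀, hx₀, rfl⟩
      rw [← lift_ord_aleph_two]
      exact Ordinal.lift_lt.2 (hB₀ hx₀)
    have hCclub : IsClubOrd (Ordinal.lift '' C₀) (aleph 2).ord := by
      rw [← lift_ord_aleph_two]
      exact lift_isClub_up hC₀
    obtain ⟨δ, hδS, hδC, hEq⟩ := hdiamond _ hBsub _ hCclub
    obtain ⟨δ₀, hδ₀C, rfl⟩ := hδC
    refine ⟨δ₀, lift_S21.1 hδS, hδ₀C, ?_⟩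
    ext x₀
    constructor
    · rintro ⟨hx₀B, hx₀δ⟩
      have : Ordinal.lift x₀ ∈ Ordinal.lift '' B₀ ∩ Set.Iio (Ordinal.lift δ₀) :=
        ⟨⟨x₀, hx₀B, rfl⟩, Ordinal.lift_lt.2 hx₀δ⟩
      rw [hEq] at this
      exact this
    · intro hx₀
      have : Ordinal.lift x₀ ∈ Ordinal.lift '' B₀ ∩ Set.Iio (Ordinal.lift δ₀) := by
        rw [hEq]; exact hx₀
      obtain ⟨⟨y₀, hy₀, hyx⟩, hlt⟩ := this
      rw [Ordinal.lift_inj.1 hyx] at hy₀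
      exact ⟨hy₀, Ordinal.lift_lt.1 hlt⟩
  -- Step B: apply the core theorem at universe 0
  obtain ⟨η₀, hη₀1, hη₀2⟩ := tcg_core A₀ hdia₀
  -- Step C: lift the conclusion up
  set η : Ordinal → Set Ordinal :=
    fun δ => {x | ∃ δ₀ x₀, δ = Ordinal.lift δ₀ ∧ x = Ordinal.lift x₀ ∧ x₀ ∈ η₀ δ₀}
    with hηdef
  have hηeq : ∀ δ₀ : Ordinal.{0}, η (Ordinal.lift δ₀) = Ordinal.lift '' η₀ δ₀ := by
    intro δ₀
    ext x
    constructor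
    · rintro ⟨δ₀', x₀, hδ, rfl, hmem⟩
      rw [← Ordinal.lift_inj.1 hδ] at hmem
      exact ⟨x₀, hmem, rfl⟩
    · rintro ⟨x₀, hmem, rfl⟩
      exact ⟨δ₀, x₀, rfl, rfl, hmem⟩
  refine ⟨η, ?_, ?_⟩
  · intro δ hδ
    have hδ2 : δ < (aleph 2).ord := hδ.1
    rw [← lift_ord_aleph_two] at hδ2
    obtain ⟨δ₀, hδ₀2, rfl⟩ := Ordinal.lt_lift_iff.1 hδ2
    have hδ₀S : S21 δ₀ := lift_S21.1 hδ
    obtain ⟨h1, h2⟩ := hη₀1 δ₀ hδ₀S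
    rw [hηeq δ₀]
    refine ⟨lift_isClub_up h1, ?_⟩
    rw [← lift_ord_aleph_one]
    exact lift_hasOrderType h2
  · intro C hC
    have hC₀ : IsClubOrd {x₀ : Ordinal.{0} | Ordinal.lift x₀ ∈ C} (aleph 2).ord := by
      apply lift_isClub_down
      rwa [lift_ord_aleph_two]
    obtain ⟨δ₀, hδ₀S, δ₀', hδ₀'lt, hsub⟩ := hη₀2 _ hC₀
    refine ⟨Ordinal.lift δ₀, lift_S21.2 hδ₀S, Ordinal.lift δ₀', Ordinal.lift_lt.2 hδ₀'lt, ?_⟩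
    rintro x ⟨hxη, hxge⟩
    rw [hηeq δ₀] at hxη
    obtain ⟨x₀, hx₀, rfl⟩ := hxη
    exact hsub ⟨hx₀, Ordinal.lift_le.1 hxge⟩
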